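/- arXiv:0904.2101 — 3 statements merged into one kernel-verified Lean document; each statement's English description precedes it below -/
import Mathlib

section
/- For every integer t ≥ 3 and every odd positive integer u, the 2-adic valuation of (2^t·u - 1)!! - 1 equals t. -/
open Finset

/-- In a commutative ring, if `c` is square-zero, a product of `1 + c * f i` collapses. -/
private lemma nilpotent_prod {R : Type*} [CommRing R] (c : R) (hc : c * c = 0)
    (f : ℕ → R) (n : ℕ) :
    ∏ i ∈ range n, (1 + c * f i) = 1 + c * ∑ i ∈ range n, f i := by
  induction n with
  | zero => simp
  | succ n ih =>
    rw [prod_range_succ, sum_range_succ, ih]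
    linear_combination ((∑ i ∈ range n, f i) * f n) * hc

private lemma two_pow_eq_zero (m e : ℕ) (h : m ≤ e) : (2 : ZMod (2 ^ m)) ^ e = 0 := by
  have h1 : ((2 ^ e : ℕ) : ZMod (2 ^ m)) = 0 := by
    rw [ZMod.natCast_eq_zero_iff]
    exact pow_dvd_pow 2 h
  push_cast at h1
  exact h1

private lemma sum_odds (n : ℕ) : ∑ r ∈ range n, (2 * r + 1) = n ^ 2 := by
  induction n with
  | zero => simp
  | succ n ih => rw [sum_range_succ, ih]; ring

/-- The key shift lemma: `∏ (2r+1+c) ≡ (∏ (2r+1)) * (1 + c n²)` mod M when `8c ≡ 0` and `c² ≡ 0`. -/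
private lemma prod_shift (M c n : ℕ)
    (h8 : ((8 * c : ℕ) : ZMod M) = 0)
    (hcc : ((c : ℕ) : ZMod M) * ((c : ℕ) : ZMod M) = 0) :
    ((∏ r ∈ range n, (2 * r + 1 + c) : ℕ) : ZMod M)
      = ((∏ r ∈ range n, (2 * r + 1) : ℕ) : ZMod M)
        * (1 + (c : ZMod M) * (n : ZMod M) ^ 2) := by
  push_cast at h8 hcc ⊢
  have key : ∀ r : ℕ, ((2 : ZMod M) * r + 1 + c)
      = (2 * (r : ZMod M) + 1) * (1 + (c : ZMod M) * (2 * r + 1)) := by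
    intro r
    obtain ⟨k, hk⟩ := Nat.even_mul_succ_self r
    have hsq : (2 * r + 1) ^ 2 = 8 * k + 1 := by
      have : (2 * r + 1) ^ 2 = 4 * (r * (r + 1)) + 1 := by ring
      omega
    have hsq' : ((2 : ZMod M) * r + 1) ^ 2 = 8 * k + 1 := by
      exact_mod_cast congrArg (fun x : ℕ => (x : ZMod M)) hsq
    linear_combination (-(c : ZMod M)) * hsq' + (-(k : ZMod M)) * h8
  rw [Finset.prod_congr rfl (fun r _ => key r), Finset.prod_mul_distrib,
    nilpotent_prod _ hcc]
  have hs : ∑ r ∈ range n, ((2 : ZMod M) * r + 1) = (n : ZMod M) ^ 2 := by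
    have := sum_odds n
    have h2 : ((∑ r ∈ range n, (2 * r + 1) : ℕ) : ZMod M) = ((n ^ 2 : ℕ) : ZMod M) := by
      rw [this]
    push_cast at h2
    exact h2
  rw [hs]

private lemma prod_mul_pow (M N : ℕ)
    (h8 : ((8 * N : ℕ) : ZMod M) = 0)
    (h2 : ((2 * N * N : ℕ) : ZMod M) = 0) (u : ℕ) :
    ((∏ i ∈ range (N * u), (2 * i + 1) : ℕ) : ZMod M)
      = (((∏ i ∈ range N, (2 * i + 1) : ℕ) : ZMod M)) ^ u := by
  induction u with
  | zero => simp
  | succ u ih =>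
    have hsplit : (∏ i ∈ range (N * (u + 1)), (2 * i + 1))
        = (∏ i ∈ range (N * u), (2 * i + 1)) * ∏ r ∈ range N, (2 * r + 1 + 2 * N * u) := by
      rw [Nat.mul_succ, Finset.prod_range_add]
      congr 1
      exact Finset.prod_congr rfl (fun r _ => by ring)
    have h8' : ((8 * (2 * N * u) : ℕ) : ZMod M) = 0 := by
      have : (8 * (2 * N * u) : ℕ) = (8 * N) * (2 * u) := by ring
      rw [this]; push_cast; push_cast at h8; rw [h8]; ring
    have hcc' : (((2 * N * u : ℕ) : ZMod M)) * ((2 * N * u : ℕ) : ZMod M) = 0 := by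
      have : (2 * N * u) * (2 * N * u) = (2 * N * N) * (2 * u * u) := by ring
      rw [← Nat.cast_mul, this]; push_cast; push_cast at h2; rw [h2]; ring
    have hshift := prod_shift M (2 * N * u) N h8' hcc'
    have hNN : ((2 * N * u : ℕ) : ZMod M) * ((N : ℕ) : ZMod M) ^ 2 = 0 := by
      have : ((2 * N * u : ℕ) : ZMod M) * ((N : ℕ) : ZMod M) ^ 2
          = ((2 * N * N : ℕ) : ZMod M) * ((N * u : ℕ) : ZMod M) := by push_cast; ring
      rw [this, h2, zero_mul]
    rw [hsplit, Nat.cast_mul, ih, hshift, hNN, pow_succ]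
    ring

/-- The `u = 1` core: `∏_{i < 2^(t-1)} (2i+1) ≡ 1 + 2^t mod 2^(t+1)` for `t ≥ 3`. -/
private lemma core_u1 (t : ℕ) (ht : 3 ≤ t) :
    (∏ i ∈ range (2 ^ (t - 1)), (2 * i + 1)) ≡ 1 + 2 ^ t [MOD 2 ^ (t + 1)] := by
  induction t, ht using Nat.le_induction with
  | base => decide
  | succ t ht ih =>
    -- lift ih to an integer witness
    have hdvd : ((2 ^ (t + 1) : ℕ) : ℤ) ∣ ((1 + 2 ^ t : ℕ) : ℤ)
        - ((∏ i ∈ range (2 ^ (t - 1)), (2 * i + 1) : ℕ) : ℤ) := ih.dvd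
    obtain ⟨b, hb⟩ := hdvd
    have hP : ((∏ i ∈ range (2 ^ (t - 1)), (2 * i + 1) : ℕ) : ℤ)
        = 1 + 2 ^ t - 2 ^ (t + 1) * b := by push_cast at hb ⊢; linarith
    set M := 2 ^ (t + 2) with hM
    rw [show t + 1 - 1 = t by omega, ← ZMod.natCast_eq_natCast_iff]
    have hsplit : (2 : ℕ) ^ t = 2 ^ (t - 1) * 2 := by
      rw [← pow_succ]; congr 1; omega
    have h8 : ((8 * 2 ^ (t - 1) : ℕ) : ZMod M) = 0 := by
      have : (8 * 2 ^ (t - 1) : ℕ) = 2 ^ (t + 2) := by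
        rw [show t + 2 = (t - 1) + 3 by omega, pow_add]; ring
      rw [this, hM, ZMod.natCast_self]
    have h2 : ((2 * 2 ^ (t - 1) * 2 ^ (t - 1) : ℕ) : ZMod M) = 0 := by
      rw [ZMod.natCast_eq_zero_iff, hM]
      have : (2 * 2 ^ (t - 1) * 2 ^ (t - 1) : ℕ) = 2 ^ (2 * t - 1) := by
        rw [show 2 * t - 1 = 1 + (t - 1) + (t - 1) by omega, pow_add, pow_add]; ring
      rw [this]
      exact pow_dvd_pow 2 (by omega)
    have := prod_mul_pow M (2 ^ (t - 1)) h8 h2 2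
    rw [hsplit, this]
    -- cast the integer witness into ZMod M
    have hPz : ((∏ i ∈ range (2 ^ (t - 1)), (2 * i + 1) : ℕ) : ZMod M)
        = 1 + 2 ^ t - 2 ^ (t + 1) * (b : ZMod M) := by
      have := congrArg (fun z : ℤ => (z : ZMod M)) hb
      push_cast at this ⊢
      linear_combination -this
    rw [hPz]
    have hc2 : (2 : ZMod M) ^ t * (2 : ZMod M) ^ t = 0 := by
      rw [← pow_add]
      exact two_pow_eq_zero (t + 2) (t + t) (by omega)
    have h4c : (4 : ZMod M) * (2 : ZMod M) ^ t = 0 := by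
      have h := two_pow_eq_zero (t + 2) (t + 2) le_rfl
      calc (4 : ZMod M) * 2 ^ t = 2 ^ (t + 2) := by ring
        _ = 0 := h
    push_cast
    linear_combination (-(b : ZMod M)) * h4c + (1 - 2 * (b : ZMod M)) ^ 2 * hc2

/-- For `t ≥ 3` and odd positive `u`, `v₂((2^t·u - 1)!! - 1) = t`, where
`(2^t·u - 1)!! = ∏ i < 2^(t-1)·u, (2i+1)`. -/
theorem stmt2 (t u : ℕ) (ht : 3 ≤ t) (hu : Odd u) (hu0 : 0 < u) :
    padicValNat 2 ((∏ i ∈ Finset.range (2 ^ (t - 1) * u), (2 * i + 1)) - 1) = t := by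
  haveI : Fact (Nat.Prime 2) := ⟨Nat.prime_two⟩
  set M := 2 ^ (t + 1) with hM
  -- step 1: the product is ≡ 1 + 2^t mod 2^(t+1)
  have h8 : ((8 * 2 ^ (t - 1) : ℕ) : ZMod M) = 0 := by
    rw [ZMod.natCast_eq_zero_iff, hM]
    have : (8 * 2 ^ (t - 1) : ℕ) = 2 ^ (t + 2) := by
      rw [show t + 2 = (t - 1) + 3 by omega, pow_add]; ring
    rw [this]; exact pow_dvd_pow 2 (by omega)
  have h2 : ((2 * 2 ^ (t - 1) * 2 ^ (t - 1) : ℕ) : ZMod M) = 0 := by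
    rw [ZMod.natCast_eq_zero_iff, hM]
    have : (2 * 2 ^ (t - 1) * 2 ^ (t - 1) : ℕ) = 2 ^ (2 * t - 1) := by
      rw [show 2 * t - 1 = 1 + (t - 1) + (t - 1) by omega, pow_add, pow_add]; ring
    rw [this]; exact pow_dvd_pow 2 (by omega)
  have hcore := core_u1 t ht
  obtain ⟨b, hb⟩ := hcore.dvd
  have hPz : ((∏ i ∈ range (2 ^ (t - 1)), (2 * i + 1) : ℕ) : ZMod M)
      = 1 + 2 ^ t - 2 ^ (t + 1) * (b : ZMod M) := by
    have := congrArg (fun z : ℤ => (z : ZMod M)) hb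
    push_cast at this ⊢
    linear_combination -this
  have h2c : (2 : ZMod M) ^ (t + 1) = 0 := two_pow_eq_zero (t + 1) (t + 1) le_rfl
  have hc2 : (2 : ZMod M) ^ t * (2 : ZMod M) ^ t = 0 := by
    rw [← pow_add]; exact two_pow_eq_zero (t + 1) (t + t) (by omega)
  have hP1 : ((∏ i ∈ range (2 ^ (t - 1)), (2 * i + 1) : ℕ) : ZMod M)
      = 1 + 2 ^ t := by
    rw [hPz, h2c]; ring
  obtain ⟨m, hm⟩ := hu
  have hmain : ((∏ i ∈ range (2 ^ (t - 1) * u), (2 * i + 1) : ℕ) : ZMod M)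
      = ((1 + 2 ^ t : ℕ) : ZMod M) := by
    rw [prod_mul_pow M (2 ^ (t - 1)) h8 h2 u, hP1]
    have hbinom : ((1 : ZMod M) + 2 ^ t) ^ u = 1 + (u : ZMod M) * 2 ^ t := by
      have := nilpotent_prod ((2 : ZMod M) ^ t) hc2 (fun _ => 1) u
      simpa [Finset.prod_const, mul_comm] using this
    rw [hbinom, hm]
    push_cast
    have : ((m : ZMod M) * 2) * 2 ^ t = (m : ZMod M) * 2 ^ (t + 1) := by ring
    rw [show ((2 : ZMod M) * m + 1) * 2 ^ t = 2 ^ t + (m : ZMod M) * 2 ^ (t + 1) by ring,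
      h2c]
    ring
  have hmod : (∏ i ∈ range (2 ^ (t - 1) * u), (2 * i + 1)) ≡ 1 + 2 ^ t [MOD M] :=
    (ZMod.natCast_eq_natCast_iff _ _ _).mp hmain
  -- step 2: extract the 2-adic valuation
  set P := ∏ i ∈ range (2 ^ (t - 1) * u), (2 * i + 1) with hPdef
  have hP1le : 1 ≤ P := Nat.one_le_iff_ne_zero.mpr
    (Finset.prod_ne_zero_iff.mpr (fun i _ => by omega))
  have hD : P - 1 ≡ 2 ^ t [MOD M] := by
    have : (P - 1) + 1 ≡ 2 ^ t + 1 [MOD M] := by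
      rw [Nat.sub_add_cancel hP1le]
      simpa [Nat.add_comm] using hmod
    exact Nat.ModEq.add_right_cancel' 1 this
  have hlt : (2 : ℕ) ^ t < M := by
    rw [hM]; exact Nat.pow_lt_pow_right (by norm_num) (by omega)
  have hmodeq : (P - 1) % M = 2 ^ t := by
    have := hD
    rwa [Nat.ModEq, Nat.mod_eq_of_lt hlt] at this
  obtain ⟨q, hq⟩ : ∃ q, P - 1 = 2 ^ t * (2 * q + 1) := by
    refine ⟨(P - 1) / M, ?_⟩
    have hdm := Nat.div_add_mod (P - 1) M
    rw [hmodeq] at hdm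
    have hMe : M = 2 * 2 ^ t := by rw [hM, pow_succ]; ring
    calc P - 1 = M * ((P - 1) / M) + 2 ^ t := hdm.symm
      _ = 2 ^ t * (2 * ((P - 1) / M) + 1) := by rw [hMe]; ring
  rw [hq, padicValNat.mul (pow_ne_zero _ two_ne_zero) (by omega),
    padicValNat.prime_pow, padicValNat.eq_zero_of_not_dvd (by omega)]
  omega
end

section
/- For every positive odd integer x and every positive integer n, the 2-adic valuation of (2n-1)!!^x + (-1)^((n-1)(n-2)/2) equals the 2-adic valuation of 2n. -/
open Finset


private def DD (n : ℕ) : ℤ := ∏ i ∈ Finset.range n, (2 * (i : ℤ) + 1)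

private lemma DD_odd (n : ℕ) : Odd (DD n) := by
  have h2 : ¬ (((2:ℕ):ℤ) ∣ DD n) := by
    rw [← ZMod.intCast_zmod_eq_zero_iff_dvd]
    unfold DD
    push_cast
    have hone : ∀ x ∈ Finset.range n, (2 * ((x : ℕ) : ZMod 2) + 1) = 1 := by
      intro x _
      rw [show ((2 : ZMod 2)) = 0 from rfl]; ring
    rw [Finset.prod_congr rfl hone]
    simp
  rw [Int.odd_iff]
  omega

private lemma DD_add_four (k : ℕ) :
    DD (k + 4) = DD k *
      ((2*(k:ℤ)+1) * (2*(k:ℤ)+3) * (2*(k:ℤ)+5) * (2*(k:ℤ)+7)) := by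
  unfold DD
  rw [Finset.prod_range_add]
  congr 1
  simp [Finset.prod_range_succ]
  ring

private lemma DD_mod8 : ∀ n : ℕ, DD n % 8 = DD (n % 4) % 8 := by
  intro n
  induction n using Nat.strong_induction_on with
  | _ n ih =>
    rcases lt_or_ge n 4 with h | h
    · rw [Nat.mod_eq_of_lt h]
    · obtain ⟨k, rfl⟩ : ∃ k, n = k + 4 := ⟨n - 4, by omega⟩
      have h1 := ih k (by omega)
      have h2 := DD_add_four k
      obtain ⟨q, hq⟩ : ∃ q, (2*(k:ℤ)+1) * (2*(k:ℤ)+3) * (2*(k:ℤ)+5) * (2*(k:ℤ)+7)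
          = 8 * q + 1 := by
        refine ⟨2*(k:ℤ)^2*((k:ℤ)+4)^2 + 11*(k:ℤ)*((k:ℤ)+4) + 13, by ring⟩
      have h4 : DD (k + 4) = DD k + 8 * (DD k * q) := by rw [h2, hq]; ring
      rw [show (k + 4) % 4 = k % 4 by omega, ← h1]
      omega


private lemma prod_add_nilp {R : Type*} [CommRing R] (a : ℕ → R) (c : R) (hc : c * c = 0)
    (m : ℕ) : ∏ i ∈ range m, (a i + c)
      = ∏ i ∈ range m, a i + c * ∑ i ∈ range m, ∏ j ∈ (range m).erase i, a j := by
  induction m with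
  | zero => simp
  | succ m ih =>
    rw [Finset.prod_range_succ, ih, Finset.prod_range_succ]
    have h2 : (range (m+1)).erase m = range m := by
      ext j; simp only [Finset.mem_erase, Finset.mem_range]; omega
    have h3 : ∀ i ∈ range m, ∏ j ∈ (range (m+1)).erase i, a j
        = (∏ j ∈ (range m).erase i, a j) * a m := by
      intro i hi
      have hi' : i < m := Finset.mem_range.mp hi
      have h4 : (range (m+1)).erase i = insert m ((range m).erase i) := by
        ext j
        simp only [Finset.mem_erase, Finset.mem_range, Finset.mem_insert]
        omega
      rw [h4, Finset.prod_insert (by simp)]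
      ring
    rw [Finset.sum_range_succ, h2, Finset.sum_congr rfl h3, ← Finset.sum_mul]
    linear_combination (∑ i ∈ range m, ∏ j ∈ (range m).erase i, a j) * hc

private lemma T_div4 (m : ℕ) (hm : m % 2 = 0) :
    (4:ℤ) ∣ ∑ i ∈ range m, ∏ j ∈ (range m).erase i, (2*(j:ℤ)+1) := by
  rcases Nat.eq_zero_or_pos m with rfl | hm0
  · simp
  have key : ((∑ i ∈ range m, ∏ j ∈ (range m).erase i, (2*(j:ℤ)+1) : ℤ) : ZMod 4) = 0 := by
    push_cast
    have h2m : (2 : ZMod 4) * (m : ℕ) = 0 := by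
      have : (((2*m : ℕ)) : ZMod 4) = 0 := by
        rw [ZMod.natCast_eq_zero_iff]; omega
      push_cast at this; linear_combination this
    apply Finset.sum_involution (g := fun i _ => m - 1 - i)
    · -- hg₁ : ∀ i hi, f i + f (m-1-i) = 0
      intro i hi
      have hi' : i < m := Finset.mem_range.mp hi
      have hbij : ∏ j ∈ (range m).erase (m - 1 - i), (2*((j:ℕ):ZMod 4)+1)
          = ∏ j ∈ (range m).erase i, (2*(((m - 1 - j : ℕ)):ZMod 4)+1) := by
        apply Finset.prod_bij' (i := fun a _ => m - 1 - a) (j := fun a _ => m - 1 - a)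
        · intro a ha
          simp only [Finset.mem_erase, Finset.mem_range] at ha ⊢
          omega
        · intro a ha
          simp only [Finset.mem_erase, Finset.mem_range] at ha ⊢
          omega
        · intro a ha
          simp only [Finset.mem_erase, Finset.mem_range] at ha
          omega
        · intro a ha
          simp only [Finset.mem_erase, Finset.mem_range] at ha
          omega
        · intro a ha
          simp only [Finset.mem_erase, Finset.mem_range] at ha
          have h5 : m - 1 - (m - 1 - a) = a := by omega
          rw [h5]
      rw [hbij]
      have hneg : ∀ j ∈ (range m).erase i, (2*(((m - 1 - j : ℕ)):ZMod 4)+1)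
          = (-1) * (2*((j:ℕ):ZMod 4)+1) := by
        intro j hj
        simp only [Finset.mem_erase, Finset.mem_range] at hj
        have hcast : (((m - 1 - j : ℕ)) : ZMod 4) = (m : ℕ) - 1 - (j : ℕ) := by
          push_cast [Nat.cast_sub (by omega : j ≤ m - 1), Nat.cast_sub (by omega : 1 ≤ m)]
          ring
        rw [hcast]
        linear_combination h2m
      rw [Finset.prod_congr rfl hneg, Finset.prod_mul_distrib, Finset.prod_const,
        Finset.card_erase_of_mem hi, Finset.card_range,
        Odd.neg_one_pow (by rw [Nat.odd_iff]; omega : Odd (m - 1))]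
      ring
    · -- hg₃
      intro i hi _
      have hi' : i < m := Finset.mem_range.mp hi
      omega
    · -- g_mem
      intro i hi
      have hi' : i < m := Finset.mem_range.mp hi
      simp only [Finset.mem_range]
      omega
    · -- involutive
      intro i hi
      have hi' : i < m := Finset.mem_range.mp hi
      omega
  have := (ZMod.intCast_zmod_eq_zero_iff_dvd _ 4).mp key
  exact_mod_cast this

private lemma doubling (m : ℕ) (hm : m % 2 = 0) (hm0 : 0 < m) :
    DD (2*m) ≡ DD m * DD m [ZMOD ((2^(padicValNat 2 m + 3) : ℕ) : ℤ)] := by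
  set v := padicValNat 2 m with hv
  have hv1 : 1 ≤ v := one_le_padicValNat_of_dvd hm0.ne' (by omega)
  obtain ⟨u, hu⟩ : 2^v ∣ m := pow_padicValNat_dvd
  obtain ⟨t, ht⟩ := T_div4 m hm
  set N := 2^(v+3) with hN
  have hsplit : DD (2*m) = DD m * ∏ i ∈ range m, ((2*(i:ℤ)+1) + 2*(m:ℤ)) := by
    unfold DD
    rw [two_mul, Finset.prod_range_add]
    congr 1
    apply Finset.prod_congr rfl
    intro i _
    push_cast
    ring
  have hDm : ((DD m : ℤ) : ZMod N) = ∏ i ∈ range m, (2*((i:ℕ):ZMod N)+1) := by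
    unfold DD; push_cast; rfl
  have hc : (2*((m:ℕ):ZMod N)) * (2*((m:ℕ):ZMod N)) = 0 := by
    have hdvd : N ∣ 4*m^2 := by
      rw [hN, hu]
      exact dvd_trans (pow_dvd_pow 2 (by omega : v+3 ≤ 2*v+2)) ⟨u^2, by ring⟩
    have h0 : ((4*m^2 : ℕ) : ZMod N) = 0 := (ZMod.natCast_eq_zero_iff _ _).mpr hdvd
    push_cast at h0
    linear_combination h0
  have hmz : (m:ℤ) = 2^v * u := by exact_mod_cast congrArg (Nat.cast : ℕ → ℤ) hu
  have hT : (2*((m:ℕ):ZMod N)) *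
      (∑ i ∈ range m, ∏ j ∈ (range m).erase i, (2*((j:ℕ):ZMod N)+1)) = 0 := by
    have h1 : ((2*(m:ℤ) * (∑ i ∈ range m, ∏ j ∈ (range m).erase i, (2*(j:ℤ)+1)) : ℤ)
        : ZMod N) = 0 := by
      rw [ZMod.intCast_zmod_eq_zero_iff_dvd, ht, hmz]
      refine ⟨u * t, ?_⟩
      push_cast [hN]
      ring
    push_cast at h1
    linear_combination h1
  rw [← ZMod.intCast_eq_intCast_iff, hsplit]
  push_cast
  rw [show (∏ i ∈ range m, (2*((i:ℕ):ZMod N)+1 + 2*((m:ℕ):ZMod N)))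
      = ∏ i ∈ range m, (2*((i:ℕ):ZMod N)+1) + (2*((m:ℕ):ZMod N)) *
        ∑ i ∈ range m, ∏ j ∈ (range m).erase i, (2*((j:ℕ):ZMod N)+1) from
      prod_add_nilp (fun i => 2*((i:ℕ):ZMod N)+1) _ hc m]
  rw [hT, ← hDm]
  ring

private lemma eps_parity : ∀ n : ℕ, 1 ≤ n →
    ((n-1)*(n-2)/2) % 2 = (if n % 4 = 1 ∨ n % 4 = 2 then 0 else 1) := by
  intro n
  induction n using Nat.strong_induction_on with
  | _ n ih =>
    intro hn
    rcases lt_or_ge n 5 with h | h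
    · interval_cases n <;> decide
    · obtain ⟨k, rfl⟩ : ∃ k, n = k + 4 := ⟨n - 4, by omega⟩
      have h1 := ih k (by omega) (by omega)
      rw [show (k + 4) % 4 = k % 4 by omega]
      rcases Nat.lt_or_ge k 2 with hk | hk
      · interval_cases k <;> decide
      · obtain ⟨j, rfl⟩ : ∃ j, k = j + 2 := ⟨k - 2, by omega⟩
        have e1 : j+2+4-1 = j+5 := by omega
        have e2 : j+2+4-2 = j+4 := by omega
        have e3 : j+2-1 = j+1 := by omega
        have e4 : j+2-2 = j := by omega
        rw [e1, e2]
        rw [e3, e4] at h1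
        have hr : (j+5)*(j+4) = (j+1)*j + 8*j + 20 := by ring
        have hcomm : (j+1)*j = j*(j+1) := Nat.mul_comm _ _
        obtain ⟨r, hr2⟩ := Nat.even_mul_succ_self j
        split_ifs at h1 ⊢ <;> omega

private lemma key : ∀ n : ℕ, 1 ≤ n → ∃ c : ℤ, Odd c ∧
    DD n + (-1:ℤ)^((n-1)*(n-2)/2) = 2^(padicValNat 2 n + 1) * c := by
  intro n
  induction n using Nat.strong_induction_on with
  | _ n ih =>
    intro hn
    have hp := eps_parity n hn
    rcases (by omega : n % 4 = 1 ∨ n % 4 = 2 ∨ n % 4 = 3 ∨ n % 4 = 0) with h4 | h4 | h4 | h4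
    · -- n % 4 = 1
      have hv : padicValNat 2 n = 0 := padicValNat.eq_zero_of_not_dvd (by omega)
      have hd8 := DD_mod8 n
      rw [h4, show DD 1 = 1 from by unfold DD; simp] at hd8
      rw [if_pos (Or.inl h4)] at hp
      have he : (-1:ℤ)^((n-1)*(n-2)/2) = 1 :=
        Even.neg_one_pow (Nat.even_iff.mpr hp)
      obtain ⟨k, hk⟩ : ∃ k, DD n = 8*k + 1 := ⟨DD n / 8, by omega⟩
      exact ⟨4*k+1, by rw [Int.odd_iff]; omega, by rw [hv, he, hk]; ring⟩
    · -- n % 4 = 2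
      have hv : padicValNat 2 n = 1 := by
        obtain ⟨u, hu⟩ : ∃ u, n = 2*u := ⟨n/2, by omega⟩
        rw [hu, padicValNat.mul (by norm_num) (by omega),
          padicValNat.self (by norm_num),
          padicValNat.eq_zero_of_not_dvd (by omega)]
      have hd8 := DD_mod8 n
      rw [h4, show DD 2 = 3 from by unfold DD; simp [Finset.prod_range_succ]] at hd8
      rw [if_pos (Or.inr h4)] at hp
      have he : (-1:ℤ)^((n-1)*(n-2)/2) = 1 :=
        Even.neg_one_pow (Nat.even_iff.mpr hp)
      obtain ⟨k, hk⟩ : ∃ k, DD n = 8*k + 3 := ⟨DD n / 8, by omega⟩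
      exact ⟨2*k+1, by rw [Int.odd_iff]; omega, by rw [hv, he, hk]; ring⟩
    · -- n % 4 = 3
      have hv : padicValNat 2 n = 0 := padicValNat.eq_zero_of_not_dvd (by omega)
      have hd8 := DD_mod8 n
      rw [h4, show DD 3 = 15 from by unfold DD; simp [Finset.prod_range_succ]] at hd8
      rw [if_neg (by omega)] at hp
      have he : (-1:ℤ)^((n-1)*(n-2)/2) = -1 :=
        Odd.neg_one_pow (Nat.odd_iff.mpr hp)
      obtain ⟨k, hk⟩ : ∃ k, DD n = 8*k + 7 := ⟨DD n / 8, by omega⟩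
      exact ⟨4*k+3, by rw [Int.odd_iff]; omega, by rw [hv, he, hk]; ring⟩
    · -- n % 4 = 0
      obtain ⟨m, rfl⟩ : ∃ m, n = 2*m := ⟨n/2, by omega⟩
      have hm2 : m % 2 = 0 := by omega
      have hm0 : 0 < m := by omega
      obtain ⟨c, hc, hce⟩ := ih m (by omega) (by omega)
      set v := padicValNat 2 m with hv
      have hv1 : 1 ≤ v := one_le_padicValNat_of_dvd hm0.ne' (by omega)
      have hvn : padicValNat 2 (2*m) = v + 1 := by
        rw [padicValNat.mul (by norm_num) (by omega), padicValNat.self (by norm_num)]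
        omega
      have hd := doubling m hm2 hm0
      obtain ⟨k, hk⟩ : ∃ k : ℤ, DD (2*m) = DD m * DD m + 2^(v+3) * k := by
        obtain ⟨k, hk⟩ := (Int.ModEq.dvd hd)
        refine ⟨-k, ?_⟩
        push_cast at hk
        linarith
      rw [if_neg (by omega)] at hp
      have he : (-1:ℤ)^((2*m-1)*(2*m-2)/2) = -1 :=
        Odd.neg_one_pow (Nat.odd_iff.mpr hp)
      set E : ℤ := (-1:ℤ)^((m-1)*(m-2)/2) with hE
      have hEpm : E = 1 ∨ E = -1 := by
        rcases Nat.even_or_odd ((m-1)*(m-2)/2) with h | h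
        · exact Or.inl (Even.neg_one_pow h)
        · exact Or.inr (Odd.neg_one_pow h)
      have hEodd : Odd E := by rcases hEpm with h | h <;> rw [h] <;> decide
      have hDm : DD m = 2^(v+1) * c - E := by linarith [hce]
      obtain ⟨Y, hY⟩ : ∃ Y : ℤ, (2:ℤ)^v = 2*Y := ⟨2^(v-1), by
        rw [← pow_succ']
        congr 1
        omega⟩
      refine ⟨2^v * c^2 - c * E + 2*k, ?_, ?_⟩
      · have h1 : Odd (c * E) := hc.mul hEodd
        have h2 : Even ((2:ℤ)^v * c^2 + 2*k) := ⟨Y*c^2 + k, by rw [hY]; ring⟩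
        have h3 : (2:ℤ)^v * c^2 - c * E + 2*k = ((2:ℤ)^v * c^2 + 2*k) - c*E := by ring
        rw [h3]
        exact h2.sub_odd h1
      · rw [hvn, he, hk, hDm]
        have e1 : (2:ℤ)^(v+1) = 2 * 2^v := by rw [pow_succ']
        have e2 : (2:ℤ)^(v+1+1) = 4 * 2^v := by rw [pow_succ, pow_succ']; ring
        have e3 : (2:ℤ)^(v+3) = 8 * 2^v := by
          rw [show v+3 = (v+1)+2 by omega, pow_add, pow_succ']
          ring
        have hE2 : E * E = 1 := by rcases hEpm with h | h <;> rw [h] <;> norm_num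
        rw [e1, e2, e3]
        linear_combination hE2

/-- For every positive odd `x` and positive `n`,
`v₂((2n-1)!!^x + (-1)^((n-1)(n-2)/2)) = v₂(2n)`. -/
theorem stmt3 (x n : ℕ) (hx : Odd x) (hx0 : 0 < x) (hn : 1 ≤ n) :
    padicValInt 2 ((∏ i ∈ Finset.range n, (2 * (i : ℤ) + 1)) ^ x +
      (-1) ^ ((n - 1) * (n - 2) / 2)) = padicValNat 2 (2 * n) := by
  obtain ⟨c, hc, hce⟩ := key n hn
  set v := padicValNat 2 n with hv
  set P : ℤ := ∏ i ∈ Finset.range n, (2 * (i : ℤ) + 1) with hP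
  have hPD : P = DD n := rfl
  set ε : ℤ := (-1) ^ ((n - 1) * (n - 2) / 2) with hε
  have hεpm : ε = 1 ∨ ε = -1 := by
    rcases Nat.even_or_odd ((n-1)*(n-2)/2) with h | h
    · exact Or.inl (Even.neg_one_pow h)
    · exact Or.inr (Odd.neg_one_pow h)
  have hεodd : Odd ε := by rcases hεpm with h | h <;> rw [h] <;> decide
  have hPodd : Odd P := hPD ▸ DD_odd n
  have hgeom := geom_sum₂_mul P (-ε) x
  have h2 : (-ε)^x = -ε := by
    rcases hεpm with h | h <;> rw [h]
    · simpa using hx.neg_one_pow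
    · simp
  set S : ℤ := ∑ i ∈ Finset.range x, P^i * (-ε)^(x-1-i) with hS
  have hform : P^x + ε = 2^(v+1) * (S * c) := by
    have h3 : S * (P + ε) = P^x + ε := by
      have : P - (-ε) = P + ε := by ring
      rw [← this, hgeom, h2]
      ring
    rw [← h3, hPD, hce]
    ring
  have hSodd : Odd S := by
    have hP1 : ((P : ℤ) : ZMod 2) = 1 := by
      obtain ⟨p, hp⟩ := hPodd
      rw [hp]
      push_cast
      rw [show ((2:ZMod 2)) = 0 from rfl]
      ring
    have hε1 : -((ε : ℤ) : ZMod 2) = 1 := by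
      rcases hεpm with h | h <;> rw [h] <;> decide
    have hcast : ((S : ℤ) : ZMod 2) = 1 := by
      rw [hS]
      push_cast
      have hone : ∀ i ∈ Finset.range x, ((P : ZMod 2))^i * (-(ε : ZMod 2))^(x-1-i) = 1 := by
        intro i _
        rw [hP1, hε1, one_pow, one_pow, one_mul]
      rw [Finset.sum_congr rfl hone, Finset.sum_const, Finset.card_range, nsmul_eq_mul, mul_one]
      obtain ⟨y, hy⟩ := hx
      rw [hy]
      push_cast
      rw [show ((2:ZMod 2)) = 0 from rfl]
      ring
    rw [Int.odd_iff]
    by_contra hco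
    have h2d : ((2:ℕ) : ℤ) ∣ S := by omega
    rw [← ZMod.intCast_zmod_eq_zero_iff_dvd] at h2d
    rw [hcast] at h2d
    exact one_ne_zero h2d
  have hw : Odd (S * c) := hSodd.mul hc
  rw [hform]
  have hL : padicValInt 2 ((2:ℤ)^(v+1) * (S*c)) = v + 1 := by
    unfold padicValInt
    rw [Int.natAbs_mul]
    have h1 : ((2:ℤ)^(v+1)).natAbs = 2^(v+1) := by
      rw [Int.natAbs_pow]
      rfl
    have h2 : Odd (S*c).natAbs := Int.natAbs_odd.mpr hw
    have h3 : (S*c).natAbs ≠ 0 := by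
      intro h0
      rw [h0] at h2
      exact (Nat.not_odd_iff_even.mpr Even.zero) h2
    rw [h1, padicValNat.mul (p := 2) (by positivity) h3,
      padicValNat.prime_pow, padicValNat.eq_zero_of_not_dvd (by
        rw [Nat.two_dvd_ne_zero, ← Nat.odd_iff]
        exact h2)]
  rw [hL, padicValNat.mul (p := 2) two_ne_zero (by omega), padicValNat.self (by norm_num)]
  omega
end

section
/- Let x_n be defined by x_1 = 3 and, for n ≥ 2, x_n is the smallest integer greater than x_{n-1} with v_2(x_n) = v_2(n). Then for all t ≥ 0 and 0 ≤ j ≤ 2^t - 1, x_{2^t + j} = 3·2^t + j. -/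
lemma padic_add_pow2 {n t : ℕ} (hn : 0 < n) (h : n < 2 ^ (t + 1)) :
    padicValNat 2 (n + 2 ^ (t + 1)) = padicValNat 2 n := by
  haveI : Fact (Nat.Prime 2) := ⟨Nat.prime_two⟩
  have hs : padicValNat 2 n ≤ t := by
    by_contra h'
    push_neg at h'
    have hd : (2 : ℕ) ^ (t + 1) ∣ n := dvd_trans (pow_dvd_pow 2 h') pow_padicValNat_dvd
    have := Nat.le_of_dvd hn hd
    omega
  have hne : n + 2 ^ (t + 1) ≠ 0 := by positivity
  have h1 : 2 ^ padicValNat 2 n ∣ n + 2 ^ (t + 1) :=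
    dvd_add pow_padicValNat_dvd (pow_dvd_pow 2 (by omega))
  have h2 : ¬ 2 ^ (padicValNat 2 n + 1) ∣ n + 2 ^ (t + 1) := by
    intro hd
    have hd2 : (2 : ℕ) ^ (padicValNat 2 n + 1) ∣ 2 ^ (t + 1) := pow_dvd_pow 2 (by omega)
    have : (2 : ℕ) ^ (padicValNat 2 n + 1) ∣ n := by
      have := Nat.dvd_sub hd hd2
      simpa using this
    exact pow_succ_padicValNat_not_dvd hn.ne' this
  have hle1 : padicValNat 2 n ≤ padicValNat 2 (n + 2 ^ (t + 1)) :=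
    (padicValNat_dvd_iff_le hne).mp h1
  have hle2 : ¬ padicValNat 2 n + 1 ≤ padicValNat 2 (n + 2 ^ (t + 1)) := fun hc =>
    h2 ((padicValNat_dvd_iff_le hne).mpr hc)
  omega

lemma key_s6 (x : ℕ → ℕ) (h1 : x 1 = 3)
    (hrec : ∀ n, 2 ≤ n →
      IsLeast {m : ℕ | x (n - 1) < m ∧ padicValNat 2 m = padicValNat 2 n} (x n)) :
    ∀ n, 1 ≤ n → x n = n + 2 ^ (Nat.log 2 n + 1) := by
  haveI : Fact (Nat.Prime 2) := ⟨Nat.prime_two⟩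
  intro n
  induction n using Nat.strong_induction_on with
  | _ n ih =>
    intro hn
    rcases eq_or_lt_of_le hn with h | h
    · simp [← h, h1]
    · -- n ≥ 2
      set t := Nat.log 2 n with ht
      have ht1 : 2 ^ t ≤ n := Nat.pow_log_le_self 2 (by omega)
      have ht2 : n < 2 ^ (t + 1) := Nat.lt_pow_succ_log_self (by norm_num) n
      have hprev : x (n - 1) = (n - 1) + 2 ^ (Nat.log 2 (n - 1) + 1) :=
        ih (n - 1) (by omega) (by omega)
      have hlogle : Nat.log 2 (n - 1) ≤ t := Nat.log_mono_right (by omega)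
      have hmem : x (n - 1) < n + 2 ^ (t + 1) ∧
          padicValNat 2 (n + 2 ^ (t + 1)) = padicValNat 2 n := by
        constructor
        · have : (2 : ℕ) ^ (Nat.log 2 (n - 1) + 1) ≤ 2 ^ (t + 1) :=
            Nat.pow_le_pow_right (by norm_num) (by omega)
          omega
        · exact padic_add_pow2 (by omega) ht2
      have hlb : ∀ m, x (n - 1) < m → padicValNat 2 m = padicValNat 2 n →
          n + 2 ^ (t + 1) ≤ m := by
        intro m hm1 hm2
        rcases eq_or_lt_of_le ht1 with heq | hlt
        · -- n = 2 ^ t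
          have htpos : 1 ≤ t := by
            rcases Nat.eq_zero_or_pos t with h0 | h0
            · exfalso; rw [h0] at heq; simp at heq; omega
            · exact h0
          have hlog : Nat.log 2 (n - 1) = t - 1 := by
            apply Nat.log_eq_of_pow_le_of_lt_pow
            · have : (2:ℕ) ^ (t - 1) < 2 ^ t := Nat.pow_lt_pow_right (by norm_num) (by omega)
              omega
            · have : t - 1 + 1 = t := by omega
              rw [this]; omega
          have hxprev : x (n - 1) = 2 ^ (t + 1) - 1 := by
            rw [hprev, hlog]
            have h1' : t - 1 + 1 = t := by omega
            rw [h1']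
            have : (2:ℕ) ^ (t + 1) = 2 * 2 ^ t := by ring
            omega
          have hvm : padicValNat 2 m = t := by
            rw [hm2, ← heq, padicValNat.prime_pow t]
          have hmpos : 0 < m := by omega
          have hd : (2 : ℕ) ^ t ∣ m := by
            rw [← hvm]; exact pow_padicValNat_dvd
          have hnd : ¬ (2 : ℕ) ^ (t + 1) ∣ m := by
            rw [← hvm]; exact pow_succ_padicValNat_not_dvd hmpos.ne'
          obtain ⟨c, hc⟩ := hd
          have hc2 : 2 ≤ c := by
            by_contra hcc
            push_neg at hcc
            interval_cases c <;> omega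
          have hc3 : c ≠ 2 := by
            intro hcc
            exact hnd ⟨1, by rw [hc, hcc]; ring⟩
          have : 3 * 2 ^ t ≤ m := by
            rw [hc]
            have : 3 ≤ c := by omega
            nlinarith [Nat.two_pow_pos t]
          have hpow : (2:ℕ) ^ (t + 1) = 2 * 2 ^ t := by ring
          omega
        · -- 2 ^ t < n
          have hlog : Nat.log 2 (n - 1) = t :=
            Nat.log_eq_of_pow_le_of_lt_pow (by omega) (by omega)
          rw [hprev, hlog] at hm1
          omega
      have hx := hrec n (by omega)
      exact hx.unique ⟨hmem, fun m hm => hlb m hm.1 hm.2⟩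

/-- If `x 1 = 3` and for `n ≥ 2` the term `x n` is the smallest integer greater
than `x (n-1)` with `v₂(x n) = v₂(n)`, then `x (2^t + j) = 3·2^t + j` for all
`t ≥ 0` and `0 ≤ j ≤ 2^t - 1`. -/
theorem stmt6 (x : ℕ → ℕ) (h1 : x 1 = 3)
    (hrec : ∀ n, 2 ≤ n →
      IsLeast {m : ℕ | x (n - 1) < m ∧ padicValNat 2 m = padicValNat 2 n} (x n)) :
    ∀ t j : ℕ, j ≤ 2 ^ t - 1 → x (2 ^ t + j) = 3 * 2 ^ t + j := by
  intro t j hj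
  have hpow : (1:ℕ) ≤ 2 ^ t := Nat.one_le_two_pow
  have hlog : Nat.log 2 (2 ^ t + j) = t := by
    apply Nat.log_eq_of_pow_le_of_lt_pow (by omega)
    have : (2:ℕ) ^ (t + 1) = 2 * 2 ^ t := by ring
    omega
  have := key_s6 x h1 hrec (2 ^ t + j) (by omega)
  rw [hlog] at this
  have h2 : (2:ℕ) ^ (t + 1) = 2 * 2 ^ t := by ring
  omega
end
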